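/- Let p be prime, m ≥ 1, a ∈ ℚ_p nonzero with |a| ≤ 1, and let f = f_{m+1,a}. For x ∈ ℚ_p with |x| < 1 sufficiently small, the ℤ_p-orbit of x under f equals {y ∈ ℚ_p : y ≡ x (mod a x^{m+1} ℤ_p)}, i.e. orb(x) = x + a x^{m+1} ℤ_p. -/

import Mathlib

open Finset

private lemma padic_norm_sum_le {p : ℕ} [Fact p.Prime] (n : ℕ) (f : ℕ → ℚ_[p]) (δ : ℝ)
    (hδ : 0 ≤ δ) (h : ∀ i < n, ‖f i‖ ≤ δ) : ‖∑ i ∈ Finset.range n, f i‖ ≤ δ := by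
  induction n with
  | zero => simpa using hδ
  | succ n ih =>
    rw [Finset.sum_range_succ]
    refine le_trans (Padic.nonarchimedean _ _) (max_le ?_ ?_)
    · exact ih fun i hi => h i (Nat.lt_succ_of_lt hi)
    · exact h n (Nat.lt_succ_self n)

private lemma padic_pow_sub_one {p : ℕ} [Fact p.Prime] (w : ℚ_[p]) (hw : ‖w‖ ≤ 1) (i : ℕ) :
    ‖w ^ i - 1‖ ≤ ‖w - 1‖ := by
  induction i with
  | zero => simp
  | succ i ih =>
    have e : w ^ (i + 1) - 1 = w * (w ^ i - 1) + (w - 1) := by ring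
    rw [e]
    refine le_trans (Padic.nonarchimedean _ _) (max_le ?_ le_rfl)
    calc ‖w * (w ^ i - 1)‖ = ‖w‖ * ‖w ^ i - 1‖ := norm_mul _ _
      _ ≤ 1 * ‖w - 1‖ := mul_le_mul hw ih (norm_nonneg _) zero_le_one
      _ = ‖w - 1‖ := one_mul _

private lemma padic_pow_inj {p : ℕ} [Fact p.Prime] (m : ℕ) (u v : ℚ_[p]) {δ : ℝ}
    (hu : ‖u‖ ≤ 1) (hv : ‖v‖ ≤ 1) (hu1 : ‖u - 1‖ ≤ δ) (hv1 : ‖v - 1‖ ≤ δ)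
    (hδ : δ < ‖(m : ℚ_[p])‖) (h : u ^ m = v ^ m) : u = v := by
  have hδ0 : 0 ≤ δ := le_trans (norm_nonneg _) hu1
  set S : ℚ_[p] := ∑ i ∈ Finset.range m, u ^ i * v ^ (m - 1 - i) with hS
  have hgeom : S * (u - v) = 0 := by rw [hS, geom_sum₂_mul, h, sub_self]
  have hSm : ‖S - (m : ℚ_[p])‖ ≤ δ := by
    have : S - (m : ℚ_[p]) = ∑ i ∈ Finset.range m, (u ^ i * v ^ (m - 1 - i) - 1) := by
      rw [Finset.sum_sub_distrib]
      simp [hS]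
    rw [this]
    refine padic_norm_sum_le m _ δ hδ0 fun i _ => ?_
    have e : u ^ i * v ^ (m - 1 - i) - 1
        = u ^ i * (v ^ (m - 1 - i) - 1) + (u ^ i - 1) := by ring
    rw [e]
    refine le_trans (Padic.nonarchimedean _ _) (max_le ?_ ?_)
    · calc ‖u ^ i * (v ^ (m - 1 - i) - 1)‖ = ‖u ^ i‖ * ‖v ^ (m - 1 - i) - 1‖ := norm_mul _ _
        _ ≤ 1 * δ := by
            refine mul_le_mul ?_ (le_trans (padic_pow_sub_one v hv _) hv1) (norm_nonneg _)
              zero_le_one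
            rw [norm_pow]; exact pow_le_one₀ (norm_nonneg _) hu
        _ = δ := one_mul _
    · exact le_trans (padic_pow_sub_one u hu i) hu1
  have hSne : S ≠ 0 := by
    intro h0
    rw [h0, zero_sub, norm_neg] at hSm
    exact absurd hSm (not_le.mpr hδ)
  have := mul_eq_zero.mp hgeom
  rcases this with h1 | h2
  · exact absurd h1 hSne
  · exact sub_eq_zero.mp h2

theorem stmt5 {p : ℕ} [Fact p.Prime]
    (m : ℕ) (hm : 1 ≤ m) (a : ℚ_[p]) (ha0 : a ≠ 0) (ha1 : ‖a‖ ≤ 1)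
    (root : ℤ_[p] → ℚ_[p] → ℚ_[p])
    (hroot : ∀ (z : ℤ_[p]) (x : ℚ_[p]), 0 < ‖x‖ → ‖x‖ < 1 →
        (root z x) ^ m = 1 - (z : ℚ_[p]) * a * m * x ^ m ∧
        ‖root z x - (1 - (z : ℚ_[p]) * a * x ^ m)‖ ≤ ‖a * x ^ (m + 1)‖) :
    ∃ ε > 0, ∀ x : ℚ_[p], 0 < ‖x‖ → ‖x‖ < ε →
      {y : ℚ_[p] | ∃ z : ℤ_[p], y = x / root z x} =
        {y : ℚ_[p] | ∃ c : ℤ_[p], y = x + a * x ^ (m + 1) * (c : ℚ_[p])} := by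
  have hm0 : (m : ℚ_[p]) ≠ 0 := Nat.cast_ne_zero.mpr (by omega)
  have hmnorm : 0 < ‖(m : ℚ_[p])‖ := norm_pos_iff.mpr hm0
  refine ⟨min 1 ‖(m : ℚ_[p])‖, lt_min one_pos hmnorm, fun x hx0 hxε => ?_⟩
  have hx1 : ‖x‖ < 1 := lt_of_lt_of_le hxε (min_le_left _ _)
  have hxm : ‖x‖ < ‖(m : ℚ_[p])‖ := lt_of_lt_of_le hxε (min_le_right _ _)
  have hxne : x ≠ 0 := norm_pos_iff.mp hx0
  -- basic bound: ‖x‖ ^ m ≤ ‖x‖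
  have hpow : ‖x‖ ^ m ≤ ‖x‖ := by
    calc ‖x‖ ^ m ≤ ‖x‖ ^ 1 := pow_le_pow_of_le_one (norm_nonneg _) hx1.le hm
      _ = ‖x‖ := pow_one _
  set δ : ℝ := ‖a‖ * ‖x‖ ^ m with hδdef
  have hδx : δ ≤ ‖x‖ := by
    calc δ ≤ 1 * ‖x‖ ^ m := mul_le_mul_of_nonneg_right ha1 (by positivity)
      _ = ‖x‖ ^ m := one_mul _
      _ ≤ ‖x‖ := hpow
  have hδ1 : δ < 1 := lt_of_le_of_lt hδx hx1
  have hδm : δ < ‖(m : ℚ_[p])‖ := lt_of_le_of_lt hδx hxm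
  have hδ0 : 0 ≤ δ := by positivity
  have haxm : ‖a * x ^ (m + 1)‖ ≤ δ := by
    rw [norm_mul, norm_pow, pow_succ, ← mul_assoc, hδdef]
    calc ‖a‖ * ‖x‖ ^ m * ‖x‖ ≤ ‖a‖ * ‖x‖ ^ m * 1 :=
      mul_le_mul_of_nonneg_left hx1.le (by positivity)
      _ = ‖a‖ * ‖x‖ ^ m := mul_one _
  have haxne : a * x ^ (m + 1) ≠ 0 := mul_ne_zero ha0 (pow_ne_zero _ hxne)
  -- facts about root z x, any z
  have hrfacts : ∀ z : ℤ_[p], ‖root z x - 1‖ ≤ δ ∧ ‖root z x‖ = 1 := by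
    intro z
    obtain ⟨_, h2⟩ := hroot z x hx0 hx1
    have hz1 : ‖(z : ℚ_[p])‖ ≤ 1 := z.2
    have e : root z x - 1 = (root z x - (1 - (z : ℚ_[p]) * a * x ^ m))
        + (-((z : ℚ_[p]) * a * x ^ m)) := by ring
    have hb : ‖root z x - 1‖ ≤ δ := by
      rw [e]
      refine le_trans (Padic.nonarchimedean _ _) (max_le (le_trans h2 haxm) ?_)
      rw [norm_neg, norm_mul, norm_mul, norm_pow, hδdef]
      calc ‖(z : ℚ_[p])‖ * ‖a‖ * ‖x‖ ^ m ≤ 1 * ‖a‖ * ‖x‖ ^ m := by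
            refine mul_le_mul_of_nonneg_right (mul_le_mul_of_nonneg_right hz1 (norm_nonneg _))
              (by positivity)
        _ = ‖a‖ * ‖x‖ ^ m := by ring
    refine ⟨hb, le_antisymm ?_ ?_⟩
    · have : root z x = (root z x - 1) + 1 := by ring
      rw [this]
      refine le_trans (Padic.nonarchimedean _ _) (max_le (le_trans hb hδ1.le) (by simp))
    · have h1 : (1 : ℝ) ≤ max ‖root z x‖ ‖1 - root z x‖ := by
        have h := Padic.nonarchimedean (root z x) (1 - root z x)
        simpa using h
      have hflip : ‖1 - root z x‖ = ‖root z x - 1‖ := by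
        rw [← norm_neg]; congr 1; ring
      rw [hflip] at h1
      rcases le_max_iff.mp h1 with h | h
      · exact h
      · linarith [lt_of_le_of_lt hb hδ1]
  ext y
  simp only [Set.mem_setOf_eq]
  constructor
  · rintro ⟨z, rfl⟩
    obtain ⟨hb, hn⟩ := hrfacts z
    have hrne : root z x ≠ 0 := by
      intro h0; rw [h0, norm_zero] at hn; exact one_ne_zero hn.symm
    have key : x / root z x - x = x * (1 - root z x) / root z x := by
      field_simp
    have hnorm : ‖x / root z x - x‖ ≤ ‖a * x ^ (m + 1)‖ := by
      rw [key, norm_div, norm_mul, hn, div_one, norm_mul, norm_pow, pow_succ]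
      have : ‖1 - root z x‖ = ‖root z x - 1‖ := by rw [← norm_neg]; ring_nf
      rw [this]
      calc ‖x‖ * ‖root z x - 1‖ ≤ ‖x‖ * (‖a‖ * ‖x‖ ^ m) :=
            mul_le_mul_of_nonneg_left hb (norm_nonneg _)
        _ = ‖a‖ * (‖x‖ ^ m * ‖x‖) := by ring
    set c : ℚ_[p] := (x / root z x - x) / (a * x ^ (m + 1)) with hc
    have hcnorm : ‖c‖ ≤ 1 := by
      rw [hc, norm_div]
      exact div_le_one_of_le₀ hnorm (norm_nonneg _)
    refine ⟨⟨c, hcnorm⟩, ?_⟩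
    show x / root z x = x + a * x ^ (m + 1) * c
    rw [hc, mul_div_cancel₀ _ haxne]
    ring
  · rintro ⟨c, rfl⟩
    set y := x + a * x ^ (m + 1) * (c : ℚ_[p]) with hy
    have hyx : ‖y - x‖ ≤ δ := by
      rw [hy]
      have e : x + a * x ^ (m + 1) * (c : ℚ_[p]) - x = a * x ^ (m + 1) * (c : ℚ_[p]) := by ring
      rw [e, norm_mul]
      calc ‖a * x ^ (m + 1)‖ * ‖(c : ℚ_[p])‖ ≤ ‖a * x ^ (m + 1)‖ * 1 :=
            mul_le_mul_of_nonneg_left c.2 (norm_nonneg _)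
        _ = ‖a * x ^ (m + 1)‖ := mul_one _
        _ ≤ δ := haxm
    have hyxδx : ‖y - x‖ ≤ δ * ‖x‖ := by
      have e : y - x = a * x ^ (m + 1) * (c : ℚ_[p]) := by rw [hy]; ring
      rw [e, norm_mul, norm_mul, norm_pow, pow_succ, hδdef]
      calc ‖a‖ * (‖x‖ ^ m * ‖x‖) * ‖(c : ℚ_[p])‖ ≤ ‖a‖ * (‖x‖ ^ m * ‖x‖) * 1 :=
            mul_le_mul_of_nonneg_left c.2 (by positivity)
        _ = ‖a‖ * ‖x‖ ^ m * ‖x‖ := by ring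
    have hyxlt : ‖y - x‖ < ‖x‖ := by
      refine lt_of_le_of_lt hyxδx ?_
      calc δ * ‖x‖ < 1 * ‖x‖ := mul_lt_mul_of_pos_right hδ1 hx0
        _ = ‖x‖ := one_mul _
    have hyx_norm : ‖y‖ = ‖x‖ := by
      refine le_antisymm ?_ ?_
      · have e : y = x + (y - x) := by ring
        rw [e]
        exact le_trans (Padic.nonarchimedean _ _) (max_le le_rfl hyxlt.le)
      · have e : x = y + -(y - x) := by ring
        have h := Padic.nonarchimedean y (-(y - x))
        rw [← e, norm_neg] at h
        rcases le_max_iff.mp h with h' | h'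
        · exact h'
        · linarith
    have hyne : y ≠ 0 := by
      intro h0; rw [h0, norm_zero] at hyx_norm; exact absurd hyx_norm.symm (ne_of_gt hx0)
    set t : ℚ_[p] := y / x with ht
    have htne : t ≠ 0 := div_ne_zero hyne hxne
    have htnorm : ‖t‖ = 1 := by rw [ht, norm_div, hyx_norm, div_self (ne_of_gt hx0)]
    have ht1 : ‖t - 1‖ ≤ δ := by
      have e : t - 1 = a * x ^ m * (c : ℚ_[p]) := by
        rw [ht, hy]; field_simp; ring
      rw [e, norm_mul, norm_mul, norm_pow]
      calc ‖a‖ * ‖x‖ ^ m * ‖(c : ℚ_[p])‖ ≤ ‖a‖ * ‖x‖ ^ m * 1 :=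
            mul_le_mul_of_nonneg_left c.2 (by positivity)
        _ = δ := by rw [mul_one, hδdef]
    set S : ℚ_[p] := ∑ i ∈ Finset.range m, t ^ i with hS
    have hgeo : S * (t - 1) = t ^ m - 1 := geom_sum_mul t m
    have hSm : ‖S - (m : ℚ_[p])‖ ≤ δ := by
      have e : S - (m : ℚ_[p]) = ∑ i ∈ Finset.range m, (t ^ i - 1) := by
        rw [Finset.sum_sub_distrib]; simp [hS]
      rw [e]
      exact padic_norm_sum_le m _ δ hδ0 fun i _ =>
        le_trans (padic_pow_sub_one t htnorm.le i) ht1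
    have hSnorm : ‖S‖ ≤ ‖(m : ℚ_[p])‖ := by
      have e : S = (S - (m : ℚ_[p])) + (m : ℚ_[p]) := by ring
      rw [e]
      exact le_trans (Padic.nonarchimedean _ _) (max_le (le_trans hSm hδm.le) le_rfl)
    have htm : ‖t ^ m - 1‖ ≤ ‖(m : ℚ_[p])‖ * δ := by
      rw [← hgeo, norm_mul]
      exact mul_le_mul hSnorm ht1 (norm_nonneg _) (norm_nonneg _)
    have hδpos : 0 < δ := by
      rw [hδdef]
      exact mul_pos (norm_pos_iff.mpr ha0) (by positivity)
    set z' : ℚ_[p] := (t ^ m - 1) / (a * m * x ^ m * t ^ m) with hz'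
    have hdenom_ne : a * (m : ℚ_[p]) * x ^ m * t ^ m ≠ 0 :=
      mul_ne_zero (mul_ne_zero (mul_ne_zero ha0 hm0) (pow_ne_zero _ hxne)) (pow_ne_zero _ htne)
    have hz'norm : ‖z'‖ ≤ 1 := by
      rw [hz', norm_div]
      rw [div_le_one (norm_pos_iff.mpr hdenom_ne)]
      have hd : ‖a * (m : ℚ_[p]) * x ^ m * t ^ m‖ = ‖(m : ℚ_[p])‖ * δ := by
        rw [norm_mul, norm_mul, norm_mul, norm_pow, norm_pow, htnorm, one_pow, mul_one, hδdef]
        ring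
      rw [hd]
      exact htm
    set z : ℤ_[p] := ⟨z', hz'norm⟩ with hzdef
    refine ⟨z, ?_⟩
    obtain ⟨hr1, _⟩ := hroot z x hx0 hx1
    obtain ⟨hrb, hrn⟩ := hrfacts z
    have hrne : root z x ≠ 0 := by
      intro h0; rw [h0, norm_zero] at hrn; exact one_ne_zero hrn.symm
    have hzcoe : (z : ℚ_[p]) = z' := rfl
    clear_value y t S z' z
    have hx_y : x / y = t⁻¹ := by
      rw [ht]
      field_simp
    have htmne : t ^ m ≠ 0 := pow_ne_zero _ htne
    have hpow_eq : (root z x) ^ m = (x / y) ^ m := by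
      rw [hr1, hzcoe, hz', hx_y, inv_pow]
      field_simp
      ring
    have hxy1 : ‖x / y - 1‖ ≤ δ := by
      have e : x / y - 1 = -(y - x) / y := by field_simp; ring
      rw [e, norm_div, norm_neg, hyx_norm, div_le_iff₀ hx0]
      exact hyxδx
    have hxynorm : ‖x / y‖ ≤ 1 := by
      rw [norm_div, hyx_norm, div_self (ne_of_gt hx0)]
    have heq : root z x = x / y :=
      padic_pow_inj m _ _ hrn.le hxynorm hrb hxy1 hδm hpow_eq
    rw [heq]
    field_simp
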